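/- Let A and B be real symmetric matrices of the same size with rank(A+B) ≥ rank(A) + k. Then sign~(A+B) − sign~(A) ≤ 2·rank(B) − 2k, where sign~(Q) = p₊(Q) + p₀(Q) − p₋(Q) and p₊, p₀, p₋ denote the numbers of positive, zero, and negative eigenvalues respectively. -/

import Mathlib

open Finset

section Aux

open Matrix

private lemma myRank_add_le {n : ℕ} (A B : Matrix (Fin n) (Fin n) ℝ) :
    (A + B).rank ≤ A.rank + B.rank := by
  rw [Matrix.rank, Matrix.rank, Matrix.rank, Matrix.mulVecLin_add]
  have h : LinearMap.range (A.mulVecLin + B.mulVecLin) ≤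
      LinearMap.range A.mulVecLin ⊔ LinearMap.range B.mulVecLin := by
    rintro x ⟨y, rfl⟩
    exact Submodule.mem_sup.2 ⟨A.mulVecLin y, ⟨y, rfl⟩, B.mulVecLin y, ⟨y, rfl⟩, rfl⟩
  exact (Submodule.finrank_mono h).trans
    (Submodule.finrank_add_le_finrank_add_finrank _ _)

private lemma card_pos_le_rank {n : ℕ} {M P N : Matrix (Fin n) (Fin n) ℝ} (hM : M.IsHermitian)
    (hN : N.PosSemidef) (hMPN : M = P - N) :
    (univ.filter fun i => 0 < hM.eigenvalues i).card ≤ P.rank := by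
  classical
  set S := {i : Fin n // 0 < hM.eigenvalues i}
  have hcard : (univ.filter fun i => 0 < hM.eigenvalues i).card = Fintype.card S := by
    rw [Fintype.card_subtype]
  set U : Matrix (Fin n) (Fin n) ℝ := (hM.eigenvectorUnitary : Matrix (Fin n) (Fin n) ℝ) with hU
  set f : Matrix (Fin n) S ℝ := U.submatrix id Subtype.val with hf
  have hdiag : (star U) * M * U = diagonal hM.eigenvalues := by
    have := hM.conjStarAlgAut_star_eigenvectorUnitary
    simpa using this
  have key : fᴴ * M * f = diagonal (fun j : S => hM.eigenvalues j.val) := by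
    have h1 : fᴴ = (star U).submatrix Subtype.val id := by
      rw [hf, conjTranspose_submatrix, Matrix.star_eq_conjTranspose]
    have h2 : ((star U) * M * U).submatrix Subtype.val Subtype.val
        = fᴴ * M * f := by
      rw [Matrix.submatrix_mul _ _ _ (id : Fin n → Fin n) _ Function.bijective_id,
        Matrix.submatrix_mul _ _ _ (id : Fin n → Fin n) _ Function.bijective_id,
        Matrix.submatrix_id_id, h1, hf]
    rw [← h2, hdiag, Matrix.submatrix_diagonal _ _ Subtype.val_injective]
    rfl
  have hMd : PosDef (fᴴ * M * f) := by
    rw [key]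
    exact Matrix.PosDef.diagonal (fun j => j.2)
  have hPf : fᴴ * P * f = fᴴ * M * f + fᴴ * N * f := by
    have : P = M + N := by rw [hMPN]; abel
    rw [this, Matrix.mul_add, Matrix.add_mul]
  have hPd : PosDef (fᴴ * P * f) := by
    rw [hPf]
    exact hMd.add_posSemidef (hN.conjTranspose_mul_mul_same f)
  have hrk : (fᴴ * P * f).rank = Fintype.card S :=
    Matrix.rank_of_isUnit _ hPd.isUnit
  calc (univ.filter fun i => 0 < hM.eigenvalues i).card
      = (fᴴ * P * f).rank := by rw [hcard, hrk]
    _ ≤ (P * f).rank := by rw [Matrix.mul_assoc]; exact Matrix.rank_mul_le_right _ _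
    _ ≤ P.rank := Matrix.rank_mul_le_left _ _

private lemma max_ne_zero_iff' (a : ℝ) : max a 0 ≠ 0 ↔ 0 < a := by
  rcases le_or_gt a 0 with h | h
  · simp [max_eq_right h, h.not_gt]
  · simp [max_eq_left h.le, h.ne', h]

private lemma exists_decomp {n : ℕ} {M : Matrix (Fin n) (Fin n) ℝ} (hM : M.IsHermitian) :
    ∃ P N : Matrix (Fin n) (Fin n) ℝ, P.PosSemidef ∧ N.PosSemidef ∧ M = P - N ∧
      P.rank = (univ.filter fun i => 0 < hM.eigenvalues i).card := by
  classical
  set U : Matrix (Fin n) (Fin n) ℝ := (hM.eigenvectorUnitary : Matrix (Fin n) (Fin n) ℝ) with hU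
  have hUnit : IsUnit U.det := by
    have h1 : U * star U = 1 := (Matrix.mem_unitaryGroup_iff).mp hM.eigenvectorUnitary.2
    have := congrArg Matrix.det h1
    rw [Matrix.det_mul, Matrix.det_one] at this
    exact IsUnit.of_mul_eq_one _ this
  have hUnit' : IsUnit (star U).det := by
    have h1 : (star U) * U = 1 := (Matrix.mem_unitaryGroup_iff').mp hM.eigenvectorUnitary.2
    have := congrArg Matrix.det h1
    rw [Matrix.det_mul, Matrix.det_one] at this
    exact IsUnit.of_mul_eq_one _ this
  refine ⟨U * diagonal (fun i => max (hM.eigenvalues i) 0) * star U,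
          U * diagonal (fun i => max (-(hM.eigenvalues i)) 0) * star U, ?_, ?_, ?_, ?_⟩
  · exact (Matrix.PosSemidef.diagonal (fun i => le_max_right _ _)).mul_mul_conjTranspose_same U
  · exact (Matrix.PosSemidef.diagonal (fun i => le_max_right _ _)).mul_mul_conjTranspose_same U
  · have hd : diagonal (fun i => max (hM.eigenvalues i) 0)
        - diagonal (fun i => max (-(hM.eigenvalues i)) 0) = diagonal hM.eigenvalues := by
      ext i j
      rcases eq_or_ne i j with rfl | hij
      · simp only [Matrix.sub_apply, Matrix.diagonal_apply_eq]
        rcases le_or_gt (hM.eigenvalues i) 0 with h | h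
        · rw [max_eq_right h, max_eq_left (by linarith)]; ring
        · rw [max_eq_left h.le, max_eq_right (by linarith)]; ring
      · simp [Matrix.diagonal_apply_ne _ hij]
    have hspec : M = U * diagonal hM.eigenvalues * star U := by
      have := hM.spectral_theorem
      simpa using this
    rw [← Matrix.sub_mul, ← Matrix.mul_sub, hd]
    exact hspec
  · rw [Matrix.rank_mul_eq_left_of_isUnit_det _ _ hUnit',
      Matrix.rank_mul_eq_right_of_isUnit_det _ _ hUnit, Matrix.rank_diagonal,
      Fintype.card_subtype]
    congr 1
    apply Finset.filter_congr
    intro i _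
    simp [max_ne_zero_iff']

/-- subadditivity of the number of positive eigenvalues -/
private lemma card_pos_add_le {n : ℕ} {A B : Matrix (Fin n) (Fin n) ℝ}
    (hA : A.IsHermitian) (hB : B.IsHermitian) :
    (univ.filter fun i => 0 < (hA.add hB).eigenvalues i).card ≤
      (univ.filter fun i => 0 < hA.eigenvalues i).card +
      (univ.filter fun i => 0 < hB.eigenvalues i).card := by
  obtain ⟨PA, NA, hPA, hNA, hA', hrPA⟩ := exists_decomp hA
  obtain ⟨PB, NB, hPB, hNB, hB', hrPB⟩ := exists_decomp hB
  have hsum : A + B = (PA + PB) - (NA + NB) := by rw [hA', hB']; abel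
  calc (univ.filter fun i => 0 < (hA.add hB).eigenvalues i).card
      ≤ (PA + PB).rank := card_pos_le_rank (hA.add hB) (hNA.add hNB) hsum
    _ ≤ PA.rank + PB.rank := myRank_add_le _ _
    _ = _ := by rw [hrPA, hrPB]

/-- rank equals number of positive plus number of negative eigenvalues -/
private lemma rank_eq_pos_add_neg {n : ℕ} {M : Matrix (Fin n) (Fin n) ℝ}
    (hM : M.IsHermitian) :
    M.rank = (univ.filter fun i => 0 < hM.eigenvalues i).card +
      (univ.filter fun i => hM.eigenvalues i < 0).card := by
  classical
  rw [hM.rank_eq_card_non_zero_eigs, Fintype.card_subtype]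
  rw [← Finset.card_union_of_disjoint]
  · congr 1
    ext i
    simp only [Finset.mem_filter, Finset.mem_union, Finset.mem_univ, true_and]
    constructor
    · intro h; rcases h.lt_or_gt with h' | h'
      · exact Or.inr h'
      · exact Or.inl h'
    · rintro (h | h)
      · exact h.ne'
      · exact h.ne
  · rw [Finset.disjoint_filter]
    intro i _ h1 h2
    exact absurd h1 (not_lt.mpr h2.le)

private lemma card_tri {n : ℕ} (f : Fin n → ℝ) :
    (univ.filter fun i => 0 < f i).card + (univ.filter fun i => f i = 0).card +
      (univ.filter fun i => f i < 0).card = n := by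
  classical
  have h1 : (univ.filter fun i => 0 < f i).card +
      (univ.filter fun i => ¬ 0 < f i).card = n := by
    rw [Finset.card_filter_add_card_filter_not]
    simp
  have h2 : (univ.filter fun i => ¬ 0 < f i) =
      (univ.filter fun i => f i = 0) ∪ (univ.filter fun i => f i < 0) := by
    ext i
    simp only [Finset.mem_filter, Finset.mem_union, Finset.mem_univ, true_and, not_lt]
    constructor
    · intro h; rcases h.lt_or_eq with h' | h'
      · exact Or.inr h'
      · exact Or.inl h'
    · rintro (h | h)
      · exact h.le
      · exact h.le
  have h3 : Disjoint (univ.filter fun i => f i = 0) (univ.filter fun i => f i < 0) := by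
    rw [Finset.disjoint_filter]
    intro i _ h1 h2
    exact absurd h1 h2.ne
  rw [h2, Finset.card_union_of_disjoint h3] at h1
  omega

end Aux

/-- If `rank(A+B) ≥ rank A + k` for real symmetric matrices `A`, `B`, then
`sign~(A+B) - sign~(A) ≤ 2 rank B - 2k`, where `sign~(Q) = p₊(Q) + p₀(Q) - p₋(Q)`. -/
theorem signTilde_diff_le {n k : ℕ} (A B : Matrix (Fin n) (Fin n) ℝ)
    (hA : A.IsHermitian) (hB : B.IsHermitian)
    (hrank : A.rank + k ≤ (A + B).rank) :
    ((((univ.filter fun i => 0 < (hA.add hB).eigenvalues i).card : ℤ) +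
       ((univ.filter fun i => (hA.add hB).eigenvalues i = 0).card : ℤ) -
       ((univ.filter fun i => (hA.add hB).eigenvalues i < 0).card : ℤ)) -
     (((univ.filter fun i => 0 < hA.eigenvalues i).card : ℤ) +
       ((univ.filter fun i => hA.eigenvalues i = 0).card : ℤ) -
       ((univ.filter fun i => hA.eigenvalues i < 0).card : ℤ)))
      ≤ 2 * (B.rank : ℤ) - 2 * (k : ℤ) := by
  have hC := rank_eq_pos_add_neg (hA.add hB)
  have hAr := rank_eq_pos_add_neg hA
  have hBr := rank_eq_pos_add_neg hB
  have hsub := card_pos_add_le hA hB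
  have htC := card_tri ((hA.add hB).eigenvalues)
  have htA := card_tri (hA.eigenvalues)
  omega
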